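/- Let S ⊆ ℕ^d be a Frobenius generalized numerical semigroup with Frobenius gap F = F(S). Then t(S) ≤ 2·g(S) + 1 − ‖F‖. -/

import Mathlib

open Finset

/-- A generalized numerical semigroup (GNS) in `ℕ^d`: contains `0`, is closed under
componentwise addition, and has finite complement. -/
def IsGNS {d : ℕ} (S : Set (Fin d → ℕ)) : Prop :=
  (0 : Fin d → ℕ) ∈ S ∧ (∀ a ∈ S, ∀ b ∈ S, a + b ∈ S) ∧ Sᶜ.Finite

/-- A relaxed monomial order on `ℕ^d`: a (strict) total order `r` such that
`r v w → r v (w + u)` and `0` is below every nonzero element. -/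
def IsRMO {d : ℕ} (r : (Fin d → ℕ) → (Fin d → ℕ) → Prop) : Prop :=
  IsStrictTotalOrder (Fin d → ℕ) r ∧
  (∀ v w u : Fin d → ℕ, r v w → r v (w + u)) ∧
  (∀ v : Fin d → ℕ, v ≠ 0 → r 0 v)

/-- `F` is the Frobenius gap of `S` with respect to the order `r`, i.e. the
`r`-maximum of the gap set `ℕ^d \ S`. -/
def IsFrobGapWrt {d : ℕ} (S : Set (Fin d → ℕ))
    (r : (Fin d → ℕ) → (Fin d → ℕ) → Prop) (F : Fin d → ℕ) : Prop :=
  F ∉ S ∧ ∀ x, x ∉ S → x ≠ F → r x F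

/-- `F` is a Frobenius allowable gap of `S`: it is the Frobenius gap with respect to
some relaxed monomial order. -/
def FrobAllowable {d : ℕ} (S : Set (Fin d → ℕ)) (F : Fin d → ℕ) : Prop :=
  ∃ r, IsRMO r ∧ IsFrobGapWrt S r F

/-- `F` is a maximal gap of `S` with respect to the natural (componentwise)
partial order on `ℕ^d`. -/
def MaxGap {d : ℕ} (S : Set (Fin d → ℕ)) (F : Fin d → ℕ) : Prop :=
  F ∉ S ∧ ∀ x, x ∉ S → F ≤ x → x = F

/-- The set of Frobenius allowable gaps of `S`, i.e. the maximal elements of the gap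
set under the natural partial order. -/
def FA {d : ℕ} (S : Set (Fin d → ℕ)) : Set (Fin d → ℕ) := {F | MaxGap S F}

/-- The set of pseudo-Frobenius gaps of `S`. -/
def PF {d : ℕ} (S : Set (Fin d → ℕ)) : Set (Fin d → ℕ) :=
  {P | P ∉ S ∧ ∀ s ∈ S, s ≠ 0 → P + s ∈ S}

/-- `S` is quasi-irreducible: for every gap `x`, either `2x` is Frobenius allowable or
`F - x ∈ S` for some Frobenius allowable gap `F`. -/
def QuasiIrreducible {d : ℕ} (S : Set (Fin d → ℕ)) : Prop :=
  ∀ x, x ∉ S → (x + x ∈ FA S ∨ ∃ F ∈ FA S, ∃ s ∈ S, x + s = F)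

/-- `S` is a Frobenius GNS with Frobenius gap `F`: the gap set has `F` as its unique
maximal element under the natural partial order. -/
def IsFrobeniusGNS {d : ℕ} (S : Set (Fin d → ℕ)) (F : Fin d → ℕ) : Prop :=
  IsGNS S ∧ MaxGap S F ∧ ∀ x, MaxGap S x → x = F

/-- `‖F‖ = ∏ i (F^(i) + 1)`, the number of lattice points in the box `[0, F]`. -/
def normF {d : ℕ} (F : Fin d → ℕ) : ℕ := ∏ i, (F i + 1)

/-- `N(F)`: the number of Frobenius GNS in `ℕ^d` with Frobenius gap `F`. -/
noncomputable def NF {d : ℕ} (F : Fin d → ℕ) : ℕ :=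
  {S : Set (Fin d → ℕ) | IsFrobeniusGNS S F}.ncard

/-- For a Frobenius GNS `S` with Frobenius gap `F`, `t(S) ≤ 2g(S) + 1 - ‖F‖`. -/
theorem type_le_two_genus {d : ℕ} (S : Set (Fin d → ℕ)) (F : Fin d → ℕ)
    (h : IsFrobeniusGNS S F) :
    ((PF S).ncard : ℤ) ≤ 2 * (Sᶜ.ncard : ℤ) + 1 - (normF F : ℤ) := by
  classical
  obtain ⟨⟨h0, hadd, hfin⟩, hmax, huniq⟩ := h
  have hFnS : F ∉ S := hmax.1
  -- every gap is ≤ F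
  have hleF : ∀ x, x ∉ S → x ≤ F := by
    intro x hx
    set G : Finset (Fin d → ℕ) := hfin.toFinset.filter (x ≤ ·) with hG
    have hxG : x ∈ G := by
      simp [hG, Set.Finite.mem_toFinset, hx]
    obtain ⟨y, hyG, hymax⟩ := G.exists_maximal ⟨x, hxG⟩
    have hyG' := Finset.mem_filter.mp hyG
    have hyH : y ∉ S := by
      have := hyG'.1
      rw [Set.Finite.mem_toFinset] at this
      exact this
    have hxy : x ≤ y := hyG'.2
    have hyMax : MaxGap S y := by
      refine ⟨hyH, fun z hz hyz => ?_⟩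
      have hzG : z ∈ G := by
        refine Finset.mem_filter.mpr ⟨?_, le_trans hxy hyz⟩
        rw [Set.Finite.mem_toFinset]; exact hz
      have : ¬ y < z := fun hlt => hlt.not_ge (hymax hzG hlt.le)
      by_contra hne
      exact this (lt_of_le_of_ne hyz (Ne.symm hne))
    have := huniq y hyMax
    exact this ▸ hxy
  -- finsets
  have hPFsub : PF S ⊆ Sᶜ := fun p hp => hp.1
  have hPFfin : (PF S).Finite := hfin.subset hPFsub
  set Hfs := hfin.toFinset with hHfs
  set A := hPFfin.toFinset with hA
  set T : Finset (Fin d → ℕ) := (Finset.Iic F).filter (· ∈ S) with hT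
  set B : Finset (Fin d → ℕ) := T.image (fun x => F - x) with hB
  have hHsub : Hfs ⊆ Finset.Iic F := by
    intro x hx
    rw [hHfs, Set.Finite.mem_toFinset] at hx
    exact Finset.mem_Iic.mpr (hleF x hx)
  have hTcompl : T = Finset.Iic F \ Hfs := by
    ext x
    simp only [hT, Finset.mem_filter, Finset.mem_sdiff, hHfs, Set.Finite.mem_toFinset,
      Set.mem_compl_iff, not_not]
  have hIic_card : (Finset.Iic F).card = normF F := by
    rw [normF, Pi.card_Iic]
    simp [Nat.card_Iic]
  have hTH : T.card + Hfs.card = normF F := by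
    rw [hTcompl, ← hIic_card]
    exact Finset.card_sdiff_add_card_eq_card hHsub
  -- image facts
  have hmemT : ∀ x ∈ T, x ≤ F ∧ x ∈ S := by
    intro x hx
    have := Finset.mem_filter.mp hx
    exact ⟨Finset.mem_Iic.mp this.1, this.2⟩
  have hsum : ∀ x : Fin d → ℕ, x ≤ F → (F - x) + x = F := by
    intro x hx
    funext i
    exact Nat.sub_add_cancel (hx i)
  have hBsub : B ⊆ Hfs := by
    intro y hy
    obtain ⟨x, hxT, rfl⟩ := Finset.mem_image.mp hy
    obtain ⟨hxle, hxS⟩ := hmemT x hxT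
    rw [hHfs, Set.Finite.mem_toFinset, Set.mem_compl_iff]
    intro hFxS
    have : (F - x) + x ∈ S := hadd _ hFxS _ hxS
    rw [hsum x hxle] at this
    exact hFnS this
  have hBcard : B.card = T.card := by
    rw [hB]
    apply Finset.card_image_of_injOn
    intro x hx y hy hxy
    obtain ⟨hxle, _⟩ := hmemT x hx
    obtain ⟨hyle, _⟩ := hmemT y hy
    funext i
    have h1 : F i - x i = F i - y i := congrFun hxy i
    have := Nat.sub_sub_self (hxle i)
    rw [h1, Nat.sub_sub_self (hyle i)] at this
    exact this.symm
  have hAsub : A ⊆ Hfs := by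
    intro p hp
    rw [hA, Set.Finite.mem_toFinset] at hp
    rw [hHfs, Set.Finite.mem_toFinset]
    exact hPFsub hp
  have hAB : A ∩ B ⊆ {F} := by
    intro p hp
    obtain ⟨hpA, hpB⟩ := Finset.mem_inter.mp hp
    rw [hA, Set.Finite.mem_toFinset] at hpA
    obtain ⟨x, hxT, rfl⟩ := Finset.mem_image.mp hpB
    obtain ⟨hxle, hxS⟩ := hmemT x hxT
    have hx0 : x = 0 := by
      by_contra hx0
      have : (F - x) + x ∈ S := hpA.2 x hxS hx0
      rw [hsum x hxle] at this
      exact hFnS this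
    rw [hx0]
    simp
  -- count
  have hcount : A.card + B.card ≤ Hfs.card + 1 := by
    have h1 : (A ∪ B).card ≤ Hfs.card :=
      Finset.card_le_card (Finset.union_subset hAsub hBsub)
    have h2 : (A ∩ B).card ≤ 1 := by
      calc (A ∩ B).card ≤ ({F} : Finset (Fin d → ℕ)).card := Finset.card_le_card hAB
      _ = 1 := Finset.card_singleton F
    have := Finset.card_union_add_card_inter A B
    omega
  have hAcard : (PF S).ncard = A.card := Set.ncard_eq_toFinset_card _ hPFfin
  have hHcard : Sᶜ.ncard = Hfs.card := Set.ncard_eq_toFinset_card _ hfin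
  rw [hAcard, hHcard]
  rw [hBcard] at hcount
  have : A.card + normF F ≤ 2 * Hfs.card + 1 := by omega
  omega
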